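/- Let d ≥ 1, let μ be a probability measure on ℝ^d with finite fourth moment, let B = ∫ xxᵀ dμ(x), and suppose β ≥ 1 satisfies (∫|⟨x,v⟩|⁴ dμ(x))^{1/4} ≤ β (∫|⟨x,v⟩|² dμ(x))^{1/2} for all v ∈ ℝ^d. Then ‖B‖_F² ≤ λ₁(T_μ) ≤ (Σ_{i=1}^{d(d+1)/2} λ_i(T_μ)²)^{1/2} ≤ β⁴ ‖B‖_F². -/

import Mathlib

open MeasureTheory
open scoped ENNReal RealInnerProductSpace Classical

noncomputable section

/-- The outer product `x xᵀ` of a vector in Euclidean space, as a matrix. -/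
def outer {d : ℕ} (x : EuclideanSpace ℝ (Fin d)) : Matrix (Fin d) (Fin d) ℝ :=
  Matrix.of fun i j => x i * x j

/-- The trace inner product `⟨A, B⟩ = Tr (A B)` on symmetric matrices. -/
def minner {d : ℕ} (A B : Matrix (Fin d) (Fin d) ℝ) : ℝ :=
  Matrix.trace (A * B)

/-- The Frobenius norm of a matrix. -/
def frobNorm {d : ℕ} (M : Matrix (Fin d) (Fin d) ℝ) : ℝ :=
  Real.sqrt (∑ i, ∑ j, (M i j) ^ 2)

/-- Entrywise integral of a matrix-valued function. -/
def mIntegral {d : ℕ} (μ : Measure (EuclideanSpace ℝ (Fin d)))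
    (F : EuclideanSpace ℝ (Fin d) → Matrix (Fin d) (Fin d) ℝ) :
    Matrix (Fin d) (Fin d) ℝ :=
  Matrix.of fun i j => ∫ x, F x i j ∂μ

/-- The fourth moment operator `T_μ (A) = ∫ ⟨A, xxᵀ⟩ xxᵀ dμ(x)`. -/
def fourthMomentOp {d : ℕ} (μ : Measure (EuclideanSpace ℝ (Fin d)))
    (A : Matrix (Fin d) (Fin d) ℝ) : Matrix (Fin d) (Fin d) ℝ :=
  mIntegral μ (fun x => minner A (outer x) • outer x)

/-- The second moment matrix `B = ∫ xxᵀ dμ(x)`. -/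
def secondMoment {d : ℕ} (μ : Measure (EuclideanSpace ℝ (Fin d))) :
    Matrix (Fin d) (Fin d) ℝ :=
  mIntegral μ outer

/-- `lam : ℕ → ℝ` lists the eigenvalues (with multiplicity) of the fourth moment operator
`T_μ`, viewed as an operator on the `d(d+1)/2`-dimensional inner product space of symmetric
matrices, in descending order, padded by `0` beyond index `d(d+1)/2`. -/
def IsEigenSeq {d : ℕ} (μ : Measure (EuclideanSpace ℝ (Fin d))) (lam : ℕ → ℝ) : Prop :=
  Antitone lam ∧ (∀ i, d * (d + 1) / 2 ≤ i → lam i = 0) ∧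
  ∃ b : Fin (d * (d + 1) / 2) → Matrix (Fin d) (Fin d) ℝ,
    (∀ i, (b i).IsSymm) ∧
    (∀ i j, minner (b i) (b j) = if i = j then 1 else 0) ∧
    (∀ A : Matrix (Fin d) (Fin d) ℝ, A.IsSymm → A ∈ Submodule.span ℝ (Set.range b)) ∧
    (∀ i : Fin (d * (d + 1) / 2), fourthMomentOp μ (b i) = lam i • b i)

/-- The second order separation parameter `s(μ)`. -/
def sep {d : ℕ} (μ : Measure (EuclideanSpace ℝ (Fin d))) : ℝ :=
  (1 / 2) * sSup { r : ℝ | ∃ μ₁ μ₂ : Measure (EuclideanSpace ℝ (Fin d)),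
    IsProbabilityMeasure μ₁ ∧ IsProbabilityMeasure μ₂ ∧
    μ = (2 : ℝ≥0∞)⁻¹ • μ₁ + (2 : ℝ≥0∞)⁻¹ • μ₂ ∧
    r = frobNorm (secondMoment μ₁ - secondMoment μ₂) }

/-- The standard Gaussian measure `N(0, I)` on `ℝ^d`. -/
def stdGaussian (d : ℕ) : Measure (EuclideanSpace ℝ (Fin d)) :=
  (Measure.pi fun _ : Fin d => ProbabilityTheory.gaussianReal 0 1).map
    (MeasurableEquiv.toLp 2 (Fin d → ℝ))

/-- The square root of a positive semidefinite matrix, as defined in the older Mathlib. -/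
def Matrix.PosSemidef.sqrt {n : Type*} [Fintype n] [DecidableEq n]
    {A : Matrix n n ℝ} (hA : A.PosSemidef) : Matrix n n ℝ :=
  hA.1.eigenvectorUnitary.1 * Matrix.diagonal (Real.sqrt ∘ hA.1.eigenvalues) *
    (star hA.1.eigenvectorUnitary : Matrix n n ℝ)

/-- The centered Gaussian measure `N(0, B)` on `ℝ^d` with positive semidefinite
covariance matrix `B`, obtained as the pushforward of `N(0, I)` by `B^{1/2}`. -/
def gaussianCov {d : ℕ} (B : Matrix (Fin d) (Fin d) ℝ) :
    Measure (EuclideanSpace ℝ (Fin d)) :=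
  if hB : B.PosSemidef then (stdGaussian d).map (fun x => Matrix.toEuclideanLin hB.sqrt x)
  else 0

/-- The positive semidefinite square root `B^{1/2}` of a positive semidefinite matrix. -/
def psdSqrt {d : ℕ} (B : Matrix (Fin d) (Fin d) ℝ) : Matrix (Fin d) (Fin d) ℝ :=
  if hB : B.PosSemidef then hB.sqrt else 0

open MeasureTheory
open scoped RealInnerProductSpace

section Aux
variable {d : ℕ}

set_option maxRecDepth 4000 in
lemma minner_eq_sum (A M : Matrix (Fin d) (Fin d) ℝ) :
    minner A M = ∑ i, ∑ j, A i j * M j i := by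
  simp [minner, Matrix.trace, Matrix.mul_apply, Matrix.diag]

lemma minner_comm (A M : Matrix (Fin d) (Fin d) ℝ) : minner A M = minner M A :=
  Matrix.trace_mul_comm A M

lemma minner_smul_right (A M : Matrix (Fin d) (Fin d) ℝ) (c : ℝ) :
    minner A (c • M) = c * minner A M := by
  unfold minner
  rw [Matrix.mul_smul, Matrix.trace_smul, smul_eq_mul]

lemma minner_sum_left {n : ℕ} (c : Fin n → ℝ) (b : Fin n → Matrix (Fin d) (Fin d) ℝ)
    (M : Matrix (Fin d) (Fin d) ℝ) :
    minner (∑ i, c i • b i) M = ∑ i, c i * minner (b i) M := by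
  unfold minner
  rw [Matrix.sum_mul, Matrix.trace_sum]
  exact Finset.sum_congr rfl fun i _ => by rw [Matrix.smul_mul, Matrix.trace_smul, smul_eq_mul]

lemma minner_outer_outer (x y : EuclideanSpace ℝ (Fin d)) :
    minner (outer x) (outer y) = (∑ i, x i * y i) ^ 2 := by
  simp only [minner_eq_sum, outer, Matrix.of_apply, Finset.sum_mul_sum, sq]
  exact Finset.sum_congr rfl fun i _ => Finset.sum_congr rfl fun j _ => by ring

lemma outer_isSymm (x : EuclideanSpace ℝ (Fin d)) : (outer x).IsSymm := by
  unfold Matrix.IsSymm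
  ext i j
  simp [outer, mul_comm]

lemma abs_apply_le (x : EuclideanSpace ℝ (Fin d)) (i : Fin d) : |x i| ≤ ‖x‖ := by
  rw [EuclideanSpace.norm_eq, show |x i| = Real.sqrt (‖x i‖^2) by
    rw [Real.sqrt_sq_eq_abs]; simp]
  exact Real.sqrt_le_sqrt
    (Finset.single_le_sum (f := fun j => ‖x j‖^2) (fun j _ => sq_nonneg _) (Finset.mem_univ i))

lemma continuous_minner_outer (A : Matrix (Fin d) (Fin d) ℝ) :
    Continuous fun x : EuclideanSpace ℝ (Fin d) => minner A (outer x) := by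
  simp only [minner_eq_sum, outer, Matrix.of_apply]
  refine continuous_finset_sum _ fun i _ => continuous_finset_sum _ fun j _ => ?_
  exact continuous_const.mul (((EuclideanSpace.proj j).continuous).mul
    ((EuclideanSpace.proj i).continuous))

lemma abs_minner_outer_le (A : Matrix (Fin d) (Fin d) ℝ) (x : EuclideanSpace ℝ (Fin d)) :
    |minner A (outer x)| ≤ (∑ k, ∑ l, |A k l|) * ‖x‖ ^ 2 := by
  rw [minner_eq_sum]
  calc |∑ i, ∑ j, A i j * (outer x) j i| ≤ ∑ i, ∑ j, |A i j * (outer x) j i| := by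
        exact (Finset.abs_sum_le_sum_abs _ _).trans
          (Finset.sum_le_sum fun i _ => Finset.abs_sum_le_sum_abs _ _)
    _ ≤ ∑ i, ∑ j, |A i j| * ‖x‖ ^ 2 := by
        refine Finset.sum_le_sum fun i _ => Finset.sum_le_sum fun j _ => ?_
        rw [abs_mul]
        refine mul_le_mul_of_nonneg_left ?_ (abs_nonneg _)
        simp only [outer, Matrix.of_apply, abs_mul, sq]
        exact mul_le_mul (abs_apply_le x j) (abs_apply_le x i) (abs_nonneg _) (norm_nonneg _)
    _ = (∑ k, ∑ l, |A k l|) * ‖x‖ ^ 2 := by rw [Finset.sum_mul]; simp [Finset.sum_mul]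

end Aux
section Aux2
variable {d : ℕ} {μ : Measure (EuclideanSpace ℝ (Fin d))} [IsProbabilityMeasure μ]

lemma integrable_norm_sq (h4 : Integrable (fun x => ‖x‖ ^ 4) μ) :
    Integrable (fun x : EuclideanSpace ℝ (Fin d) => ‖x‖ ^ 2) μ := by
  refine ((h4.add (integrable_const 1)).mono'
    (continuous_norm.pow 2).aestronglyMeasurable ?_)
  refine Filter.Eventually.of_forall fun x => ?_
  rw [Real.norm_eq_abs, abs_of_nonneg (by positivity)]
  show ‖x‖ ^ 2 ≤ ‖x‖ ^ 4 + 1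
  nlinarith [sq_nonneg (‖x‖^2 - 1), norm_nonneg x]

lemma integrable_ff (h4 : Integrable (fun x => ‖x‖ ^ 4) μ)
    (A A' : Matrix (Fin d) (Fin d) ℝ) :
    Integrable (fun x => minner A (outer x) * minner A' (outer x)) μ := by
  refine (h4.const_mul ((∑ k, ∑ l, |A k l|) * (∑ k, ∑ l, |A' k l|))).mono'
    ((continuous_minner_outer A).mul (continuous_minner_outer A')).aestronglyMeasurable ?_
  refine Filter.Eventually.of_forall fun x => ?_
  rw [Real.norm_eq_abs, abs_mul]
  calc |minner A (outer x)| * |minner A' (outer x)|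
      ≤ ((∑ k, ∑ l, |A k l|) * ‖x‖ ^ 2) * ((∑ k, ∑ l, |A' k l|) * ‖x‖ ^ 2) :=
        mul_le_mul (abs_minner_outer_le A x) (abs_minner_outer_le A' x) (abs_nonneg _)
          (by positivity)
    _ = (∑ k, ∑ l, |A k l|) * (∑ k, ∑ l, |A' k l|) * ‖x‖ ^ 4 := by ring
                                                                                         
lemma integrable_f (h4 : Integrable (fun x => ‖x‖ ^ 4) μ) (A : Matrix (Fin d) (Fin d) ℝ) :
    Integrable (fun x => minner A (outer x)) μ := by
  refine ((integrable_norm_sq h4).const_mul (∑ k, ∑ l, |A k l|)).mono'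
    (continuous_minner_outer A).aestronglyMeasurable ?_
  exact Filter.Eventually.of_forall fun x => abs_minner_outer_le A x

lemma integrable_entry (h4 : Integrable (fun x => ‖x‖ ^ 4) μ) (A : Matrix (Fin d) (Fin d) ℝ)
    (i j : Fin d) :
    Integrable (fun x => minner A (outer x) * (x i * x j)) μ := by
  refine (h4.const_mul (∑ k, ∑ l, |A k l|)).mono'
    ((continuous_minner_outer A).mul
      ((EuclideanSpace.proj i).continuous.mul (EuclideanSpace.proj j).continuous)).aestronglyMeasurable ?_
  refine Filter.Eventually.of_forall fun x => ?_
  rw [Real.norm_eq_abs, abs_mul, abs_mul]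
  calc |minner A (outer x)| * (|x i| * |x j|)
      ≤ ((∑ k, ∑ l, |A k l|) * ‖x‖ ^ 2) * (‖x‖ * ‖x‖) := by
        refine mul_le_mul (abs_minner_outer_le A x) ?_ (by positivity) (by positivity)
        exact mul_le_mul (abs_apply_le x i) (abs_apply_le x j) (abs_nonneg _) (norm_nonneg _)
    _ = (∑ k, ∑ l, |A k l|) * ‖x‖ ^ 4 := by ring

lemma integrable_outer_entry (h4 : Integrable (fun x => ‖x‖ ^ 4) μ) (i j : Fin d) :
    Integrable (fun x : EuclideanSpace ℝ (Fin d) => x i * x j) μ := by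
  refine (integrable_norm_sq h4).mono'
    (((EuclideanSpace.proj i).continuous.mul (EuclideanSpace.proj j).continuous)).aestronglyMeasurable ?_
  refine Filter.Eventually.of_forall fun x => ?_
  rw [Real.norm_eq_abs, abs_mul, sq]
  exact mul_le_mul (abs_apply_le x i) (abs_apply_le x j) (abs_nonneg _) (norm_nonneg _)

end Aux2
section Aux3
variable {d : ℕ} {μ : Measure (EuclideanSpace ℝ (Fin d))} [IsProbabilityMeasure μ]

lemma minner_mIntegral (A : Matrix (Fin d) (Fin d) ℝ)
    (F : EuclideanSpace ℝ (Fin d) → Matrix (Fin d) (Fin d) ℝ)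
    (hF : ∀ i j, Integrable (fun x => F x i j) μ) :
    minner A (mIntegral μ F) = ∫ x, minner A (F x) ∂μ := by
  have h1 : ∀ (i j : Fin d), Integrable (fun x => A i j * F x j i) μ :=
    fun i j => (hF j i).const_mul _
  simp only [minner_eq_sum, mIntegral, Matrix.of_apply]
  rw [integral_finset_sum _ (fun i _ => integrable_finset_sum _ (fun j _ => h1 i j))]
  refine Finset.sum_congr rfl fun i _ => ?_
  rw [integral_finset_sum _ (fun j _ => h1 i j)]
  exact Finset.sum_congr rfl fun j _ => (integral_const_mul _ _).symm

lemma minner_secondMoment (h4 : Integrable (fun x => ‖x‖ ^ 4) μ)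
    (A : Matrix (Fin d) (Fin d) ℝ) :
    minner A (secondMoment μ) = ∫ x, minner A (outer x) ∂μ :=
  minner_mIntegral A outer (fun i j => by
    simpa [outer] using integrable_outer_entry h4 i j)

lemma minner_fourthMomentOp (h4 : Integrable (fun x => ‖x‖ ^ 4) μ)
    (C A : Matrix (Fin d) (Fin d) ℝ) :
    minner C (fourthMomentOp μ A) = ∫ x, minner A (outer x) * minner C (outer x) ∂μ := by
  rw [fourthMomentOp, minner_mIntegral C _ (fun i j => by
    simpa [outer, Matrix.smul_apply, smul_eq_mul, mul_assoc] using integrable_entry h4 A i j)]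
  exact integral_congr_ae (Filter.Eventually.of_forall fun x => by
    simp only []
    rw [minner_smul_right])

lemma fourthMomentOp_selfAdjoint (h4 : Integrable (fun x => ‖x‖ ^ 4) μ)
    (C A : Matrix (Fin d) (Fin d) ℝ) :
    minner C (fourthMomentOp μ A) = minner A (fourthMomentOp μ C) := by
  rw [minner_fourthMomentOp h4, minner_fourthMomentOp h4]
  exact integral_congr_ae (Filter.Eventually.of_forall fun x => mul_comm _ _)

end Aux3
lemma coeff_eq {d n : ℕ} (b : Fin n → Matrix (Fin d) (Fin d) ℝ)
    (horth : ∀ i j, minner (b i) (b j) = if i = j then 1 else 0)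
    (c : Fin n → ℝ) (j : Fin n) :
    minner (∑ i, c i • b i) (b j) = c j := by
  rw [minner_sum_left]
  rw [Finset.sum_congr rfl (fun i _ => by rw [horth i j])]
  simp

lemma quarters (I J β : ℝ) (hI : 0 ≤ I) (hJ : 0 ≤ J) (hβ : 0 ≤ β)
    (h : I ^ ((1:ℝ)/4) ≤ β * J ^ ((1:ℝ)/2)) : I ≤ β ^ 4 * J ^ 2 := by
  have h2 := pow_le_pow_left₀ (Real.rpow_nonneg hI _) h 4
  rw [mul_pow, ← Real.rpow_natCast (I ^ ((1:ℝ)/4)) 4, ← Real.rpow_mul hI,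
    ← Real.rpow_natCast (J ^ ((1:ℝ)/2)) 4, ← Real.rpow_mul hJ] at h2
  norm_num at h2
  exact h2
/-- under `L⁴`-`L²` equivalence with constant `β`,
`‖B‖_F² ≤ λ₁(T_μ) ≤ (Σ λᵢ(T_μ)²)^{1/2} ≤ β⁴ ‖B‖_F²`. -/
theorem largest_eigenvalue_frobenius
    (d : ℕ) (hd : 1 ≤ d) (μ : Measure (EuclideanSpace ℝ (Fin d)))
    [IsProbabilityMeasure μ] (h4 : Integrable (fun x => ‖x‖ ^ 4) μ)
    (β : ℝ) (hβ : 1 ≤ β)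
    (hl4l2 : ∀ v : EuclideanSpace ℝ (Fin d),
      (∫ x, (|⟪x, v⟫|) ^ 4 ∂μ) ^ ((1 : ℝ) / 4) ≤
        β * (∫ x, ⟪x, v⟫ ^ 2 ∂μ) ^ ((1 : ℝ) / 2))
    (lam : ℕ → ℝ) (hlam : IsEigenSeq μ lam) :
    frobNorm (secondMoment μ) ^ 2 ≤ lam 0 ∧
      lam 0 ≤ (∑ i : Fin (d * (d + 1) / 2), lam i ^ 2) ^ ((1 : ℝ) / 2) ∧
      (∑ i : Fin (d * (d + 1) / 2), lam i ^ 2) ^ ((1 : ℝ) / 2) ≤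
        β ^ 4 * frobNorm (secondMoment μ) ^ 2 := by
  classical
  obtain ⟨hanti, hzero, b, hbsym, horth, hspan, heig⟩ := hlam
  have hβ0 : (0:ℝ) ≤ β ^ 4 := by positivity
  have hNpos : 0 < d * (d + 1) / 2 := by
    have h2 : 2 ≤ d * (d + 1) := by nlinarith
    omega
  set i0 : Fin (d * (d + 1) / 2) := ⟨0, hNpos⟩ with hi0
  -- eigenvalues as integrals
  have hlam_int : ∀ i : Fin (d * (d + 1) / 2),
      lam i = ∫ x, minner (b i) (outer x) * minner (b i) (outer x) ∂μ := by
    intro i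
    have h := minner_fourthMomentOp h4 (b i) (b i)
    rw [heig i, minner_smul_right, horth i i] at h
    simpa using h
  have hlam_nonneg : ∀ i : Fin (d * (d + 1) / 2), 0 ≤ lam i := by
    intro i
    rw [hlam_int i]
    exact integral_nonneg fun x => mul_self_nonneg _
  have hlam0_nonneg : 0 ≤ lam 0 := hlam_nonneg i0
  -- quadratic form identity
  have quad : ∀ A : Matrix (Fin d) (Fin d) ℝ, A.IsSymm →
      minner A (fourthMomentOp μ A)
        = ∑ i : Fin (d * (d + 1) / 2), lam i * (minner A (b i)) ^ 2 := by
    intro A hA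
    obtain ⟨c, hc⟩ := (Submodule.mem_span_range_iff_exists_fun ℝ).mp (hspan A hA)
    have hcoeff : ∀ j, minner A (b j) = c j := fun j => by
      rw [← hc]; exact coeff_eq b horth c j
    calc minner A (fourthMomentOp μ A)
        = minner (∑ i, c i • b i) (fourthMomentOp μ A) := by rw [hc]
      _ = ∑ i, c i * minner (b i) (fourthMomentOp μ A) := minner_sum_left _ _ _
      _ = ∑ i : Fin (d * (d + 1) / 2), lam i * (minner A (b i)) ^ 2 := by
          refine Finset.sum_congr rfl fun i _ => ?_
          rw [fourthMomentOp_selfAdjoint h4, heig i, minner_smul_right, hcoeff i]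
          ring
  have parseval : ∀ A : Matrix (Fin d) (Fin d) ℝ, A.IsSymm →
      minner A A = ∑ i : Fin (d * (d + 1) / 2), (minner A (b i)) ^ 2 := by
    intro A hA
    obtain ⟨c, hc⟩ := (Submodule.mem_span_range_iff_exists_fun ℝ).mp (hspan A hA)
    have hcoeff : ∀ j, minner A (b j) = c j := fun j => by
      rw [← hc]; exact coeff_eq b horth c j
    calc minner A A = minner (∑ i, c i • b i) A := by rw [hc]
      _ = ∑ i, c i * minner (b i) A := minner_sum_left _ _ _
      _ = ∑ i, (minner A (b i)) ^ 2 := by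
          refine Finset.sum_congr rfl fun i _ => ?_
          rw [minner_comm (b i) A, hcoeff i]
          ring
  -- second moment facts
  have hBsymm : (secondMoment μ).IsSymm := by
    unfold Matrix.IsSymm secondMoment mIntegral
    ext i j
    simp only [Matrix.transpose_apply, Matrix.of_apply, outer]
    exact integral_congr_ae (Filter.Eventually.of_forall fun x => mul_comm _ _)
  have hfrob : frobNorm (secondMoment μ) ^ 2 = minner (secondMoment μ) (secondMoment μ) := by
    rw [frobNorm, Real.sq_sqrt (show (0:ℝ) ≤ ∑ i, ∑ j, secondMoment μ i j ^ 2 by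
      positivity), minner_eq_sum]
    refine Finset.sum_congr rfl fun i _ => Finset.sum_congr rfl fun j _ => ?_
    rw [hBsymm.apply i j]
    ring
  have hm_nonneg : 0 ≤ minner (secondMoment μ) (secondMoment μ) := hfrob ▸ sq_nonneg _
  have hm_int : minner (secondMoment μ) (secondMoment μ)
      = ∫ x, minner (secondMoment μ) (outer x) ∂μ := minner_secondMoment h4 _
  have hfint : Integrable (fun x => minner (secondMoment μ) (outer x)) μ := integrable_f h4 _
  have hffint : Integrable
      (fun x => minner (secondMoment μ) (outer x) * minner (secondMoment μ) (outer x)) μ :=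
    integrable_ff h4 _ _
  -- Jensen
  have hjensen : minner (secondMoment μ) (secondMoment μ) ^ 2
      ≤ ∫ x, minner (secondMoment μ) (outer x) * minner (secondMoment μ) (outer x) ∂μ := by
    set m := minner (secondMoment μ) (secondMoment μ) with hm
    have hnn : 0 ≤ ∫ x, (minner (secondMoment μ) (outer x) - m) ^ 2 ∂μ :=
      integral_nonneg fun x => sq_nonneg _
    have hexp : ∫ x, (minner (secondMoment μ) (outer x) - m) ^ 2 ∂μ
        = (∫ x, minner (secondMoment μ) (outer x) * minner (secondMoment μ) (outer x) ∂μ)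
          - m ^ 2 := by
      have h1 : Integrable (fun x => minner (secondMoment μ) (outer x)
          * minner (secondMoment μ) (outer x)
          - (2 * m) * minner (secondMoment μ) (outer x)) μ :=
        hffint.sub (hfint.const_mul (2 * m))
      have hcong : ∫ x, (minner (secondMoment μ) (outer x) - m) ^ 2 ∂μ
          = ∫ x, (minner (secondMoment μ) (outer x) * minner (secondMoment μ) (outer x)
              - (2 * m) * minner (secondMoment μ) (outer x) + m ^ 2) ∂μ :=
        integral_congr_ae (Filter.Eventually.of_forall fun x => by ring)
      rw [hcong, integral_add h1 (integrable_const _),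
        integral_sub hffint (hfint.const_mul (2 * m)), integral_const_mul, integral_const,
        ← hm_int]
      simp [measure_univ]
      ring
    rw [hexp] at hnn
    linarith
  have hBTB : ∫ x, minner (secondMoment μ) (outer x) * minner (secondMoment μ) (outer x) ∂μ
      = ∑ i : Fin (d * (d + 1) / 2), lam i * (minner (secondMoment μ) (b i)) ^ 2 := by
    rw [← minner_fourthMomentOp h4, quad _ hBsymm]
  have hsum_le : ∑ i : Fin (d * (d + 1) / 2), lam i * (minner (secondMoment μ) (b i)) ^ 2
      ≤ lam 0 * minner (secondMoment μ) (secondMoment μ) := by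
    rw [parseval _ hBsymm, Finset.mul_sum]
    exact Finset.sum_le_sum fun i _ =>
      mul_le_mul_of_nonneg_right (hanti (Nat.zero_le _)) (sq_nonneg _)
  have key1 : minner (secondMoment μ) (secondMoment μ) ^ 2
      ≤ lam 0 * minner (secondMoment μ) (secondMoment μ) :=
    le_trans hjensen (hBTB ▸ hsum_le)
  have part1 : frobNorm (secondMoment μ) ^ 2 ≤ lam 0 := by
    rw [hfrob]
    rcases eq_or_lt_of_le hm_nonneg with h | h
    · rw [← h]; exact hlam0_nonneg
    · rw [sq] at key1
      exact le_of_mul_le_mul_right key1 h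
  -- part 2
  have hS_nonneg : 0 ≤ ∑ i : Fin (d * (d + 1) / 2), lam i ^ 2 :=
    Finset.sum_nonneg fun i _ => sq_nonneg _
  have part2 : lam 0 ≤ (∑ i : Fin (d * (d + 1) / 2), lam i ^ 2) ^ ((1 : ℝ) / 2) := by
    rw [← Real.sqrt_eq_rpow,
      show lam 0 = Real.sqrt ((lam 0) ^ 2) from (Real.sqrt_sq hlam0_nonneg).symm]
    exact Real.sqrt_le_sqrt (Finset.single_le_sum
      (f := fun i : Fin (d * (d + 1) / 2) => lam i ^ 2)
      (fun i _ => sq_nonneg _) (Finset.mem_univ i0))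
  -- part 3
  have hS_int : ∑ i : Fin (d * (d + 1) / 2), lam i ^ 2
      = ∫ x, ∑ i : Fin (d * (d + 1) / 2),
          lam i * (minner (b i) (outer x) * minner (b i) (outer x)) ∂μ := by
    rw [integral_finset_sum _ (fun i _ => (integrable_ff h4 (b i) (b i)).const_mul _)]
    refine Finset.sum_congr rfl fun i _ => ?_
    rw [integral_const_mul, ← hlam_int i, sq]
  have hpt : ∀ x, ∑ i : Fin (d * (d + 1) / 2),
        lam i * (minner (b i) (outer x) * minner (b i) (outer x))
      = ∫ y, minner (outer x) (outer y) * minner (outer x) (outer y) ∂μ := by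
    intro x
    rw [← minner_fourthMomentOp h4 (outer x) (outer x), quad _ (outer_isSymm x)]
    refine Finset.sum_congr rfl fun i _ => ?_
    rw [minner_comm (outer x) (b i), sq]
  have hbound : ∀ x, (∫ y, minner (outer x) (outer y) * minner (outer x) (outer y) ∂μ)
      ≤ β ^ 4 * (minner (secondMoment μ) (outer x)
          * minner (secondMoment μ) (outer x)) := by
    intro x
    have ht : ∀ y : EuclideanSpace ℝ (Fin d), ⟪y, x⟫ = ∑ i, x i * y i := by
      intro y; simp [PiLp.inner_apply, mul_comm]
    have hI : ∫ y, (|⟪y, x⟫|) ^ 4 ∂μ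
        = ∫ y, minner (outer x) (outer y) * minner (outer x) (outer y) ∂μ := by
      refine integral_congr_ae (Filter.Eventually.of_forall fun y => ?_)
      show |⟪y, x⟫| ^ 4 = minner (outer x) (outer y) * minner (outer x) (outer y)
      rw [minner_outer_outer, ht y, show (4 : ℕ) = 2 * 2 from rfl, pow_mul, sq_abs]
      ring
    have hJ : ∫ y, ⟪y, x⟫ ^ 2 ∂μ = minner (secondMoment μ) (outer x) := by
      rw [minner_comm, minner_secondMoment h4]
      refine integral_congr_ae (Filter.Eventually.of_forall fun y => ?_)
      show ⟪y, x⟫ ^ 2 = minner (outer x) (outer y)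
      rw [minner_outer_outer, ht y]
    have hI_nonneg : 0 ≤ ∫ y, (|⟪y, x⟫|) ^ 4 ∂μ :=
      integral_nonneg fun y => by positivity
    have hJ_nonneg : 0 ≤ ∫ y, ⟪y, x⟫ ^ 2 ∂μ := integral_nonneg fun y => sq_nonneg _
    have h2 := quarters _ _ _ hI_nonneg hJ_nonneg (le_trans zero_le_one hβ) (hl4l2 x)
    rw [hI, hJ] at h2
    calc ∫ y, minner (outer x) (outer y) * minner (outer x) (outer y) ∂μ
        ≤ β ^ 4 * minner (secondMoment μ) (outer x) ^ 2 := h2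
      _ = β ^ 4 * (minner (secondMoment μ) (outer x)
          * minner (secondMoment μ) (outer x)) := by ring
  have hS_le : ∑ i : Fin (d * (d + 1) / 2), lam i ^ 2
      ≤ β ^ 4 * (lam 0 * minner (secondMoment μ) (secondMoment μ)) := by
    rw [hS_int]
    calc ∫ x, ∑ i : Fin (d * (d + 1) / 2),
          lam i * (minner (b i) (outer x) * minner (b i) (outer x)) ∂μ
        ≤ ∫ x, β ^ 4 * (minner (secondMoment μ) (outer x)
            * minner (secondMoment μ) (outer x)) ∂μ := by
          refine integral_mono_of_nonneg (Filter.Eventually.of_forall fun x => ?_)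
            (hffint.const_mul _) (Filter.Eventually.of_forall fun x => ?_)
          · exact Finset.sum_nonneg fun i _ =>
              mul_nonneg (hlam_nonneg i) (mul_self_nonneg _)
          · show ∑ i : Fin (d * (d + 1) / 2),
                lam i * (minner (b i) (outer x) * minner (b i) (outer x))
              ≤ β ^ 4 * (minner (secondMoment μ) (outer x)
                  * minner (secondMoment μ) (outer x))
            rw [hpt x]; exact hbound x
      _ = β ^ 4 * ∫ x, minner (secondMoment μ) (outer x)
            * minner (secondMoment μ) (outer x) ∂μ := integral_const_mul _ _
      _ = β ^ 4 * ∑ i : Fin (d * (d + 1) / 2),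
            lam i * (minner (secondMoment μ) (b i)) ^ 2 := by rw [hBTB]
      _ ≤ β ^ 4 * (lam 0 * minner (secondMoment μ) (secondMoment μ)) :=
          mul_le_mul_of_nonneg_left hsum_le hβ0
  have part3 : (∑ i : Fin (d * (d + 1) / 2), lam i ^ 2) ^ ((1 : ℝ) / 2)
      ≤ β ^ 4 * frobNorm (secondMoment μ) ^ 2 := by
    rw [hfrob, ← Real.sqrt_eq_rpow]
    have hsql : lam 0 ≤ Real.sqrt (∑ i : Fin (d * (d + 1) / 2), lam i ^ 2) := by
      rw [Real.sqrt_eq_rpow]; exact part2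
    rcases eq_or_lt_of_le (Real.sqrt_nonneg (∑ i : Fin (d * (d + 1) / 2), lam i ^ 2))
      with h0 | h0
    · rw [← h0]; exact mul_nonneg hβ0 hm_nonneg
    · have hSS : Real.sqrt (∑ i : Fin (d * (d + 1) / 2), lam i ^ 2)
          * Real.sqrt (∑ i : Fin (d * (d + 1) / 2), lam i ^ 2)
          = ∑ i : Fin (d * (d + 1) / 2), lam i ^ 2 := Real.mul_self_sqrt hS_nonneg
      refine le_of_mul_le_mul_right ?_ h0
      rw [hSS]
      have hstep : β ^ 4 * (lam 0 * minner (secondMoment μ) (secondMoment μ))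
          ≤ β ^ 4 * minner (secondMoment μ) (secondMoment μ)
            * Real.sqrt (∑ i : Fin (d * (d + 1) / 2), lam i ^ 2) := by
        have := mul_le_mul_of_nonneg_left hsql (mul_nonneg hβ0 hm_nonneg)
        calc β ^ 4 * (lam 0 * minner (secondMoment μ) (secondMoment μ))
            = β ^ 4 * minner (secondMoment μ) (secondMoment μ) * lam 0 := by ring
          _ ≤ _ := this
      exact le_trans hS_le hstep
  exact ⟨part1, part2, part3⟩

end
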